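/- Let q ≥ 3 be odd, let n ≥ 2, and let π : Fin q → Equiv.Perm (ZMod q). If there is no bijection y : Fin q → ZMod q with ∑_{j : Fin q} π j (y j) = 0 in ZMod q, then the layer-latin (n+1)-cube of order q whose layer j is L[π j, n] has no transversal. -/
import Mathlib

lemma sum_zmod_eq_zero_of_odd (q : ℕ) (hq : 3 ≤ q) (hodd : Odd q) :
    haveI : NeZero q := ⟨by omega⟩
    (∑ x : ZMod q, x) = 0 := by
  haveI : NeZero q := ⟨by omega⟩
  have h : (∑ x : ZMod q, -x) = ∑ x : ZMod q, x :=
    Fintype.sum_equiv (Equiv.neg _) _ _ (fun x => rfl)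
  have h2 : (2 : ZMod q) * ∑ x : ZMod q, x = 0 := by
    rw [Finset.sum_neg_distrib] at h
    ring_nf
    linear_combination -h
  have hu : IsUnit (2 : ZMod q) := by
    have := (ZMod.isUnit_iff_coprime 2 q).mpr (Nat.coprime_two_left.mpr hodd)
    simpa using this
  exact (hu.mul_right_eq_zero).mp h2

lemma sum_bij_zmod (q : ℕ) (hq : 3 ≤ q) (hodd : Odd q)
    (f : Fin q → ZMod q) (hf : Function.Bijective f) :
    (∑ l : Fin q, f l) = 0 := by
  haveI : NeZero q := ⟨by omega⟩
  rw [Fintype.sum_bijective f hf f id (fun x => rfl)]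
  exact sum_zmod_eq_zero_of_odd q hq hodd

/-- If the row-latin square formed by the permutations `π j` has no diagonal with zero
sum, then the layer-latin `(n+1)`-cube of odd order `q` with layers `L[π j, n]` has no
transversal. -/
theorem layer_latin_cube_no_transversal_of_no_zero_sum_diagonal
    (q n : ℕ) (hq : 3 ≤ q) (hodd : Odd q) (hn : 2 ≤ n)
    (π : Fin q → Equiv.Perm (ZMod q))
    (hdiag : ¬ ∃ y : Fin q → ZMod q, Function.Bijective y ∧
      (∑ j : Fin q, π j (y j)) = 0) :
    ¬ ∃ u : Fin q → Fin n → ZMod q,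
        (∀ j : Fin n, Function.Bijective fun l => u l j) ∧
        Function.Bijective fun l =>
          π l (u l ⟨0, by omega⟩) +
            ∑ m ∈ Finset.univ.filter (fun m : Fin n => m ≠ ⟨0, by omega⟩), u l m := by
  rintro ⟨u, hcol, hF⟩
  apply hdiag
  refine ⟨fun l => u l ⟨0, by omega⟩, hcol _, ?_⟩
  have h1 : (∑ l : Fin q, (π l (u l ⟨0, by omega⟩) +
      ∑ m ∈ Finset.univ.filter (fun m : Fin n => m ≠ ⟨0, by omega⟩), u l m)) = 0 :=
    sum_bij_zmod q hq hodd _ hF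
  rw [Finset.sum_add_distrib, Finset.sum_comm] at h1
  have h2 : ∀ m ∈ Finset.univ.filter (fun m : Fin n => m ≠ ⟨0, by omega⟩),
      (∑ l : Fin q, u l m) = 0 := fun m _ =>
    sum_bij_zmod q hq hodd _ (hcol m)
  rw [Finset.sum_congr rfl h2, Finset.sum_const_zero, add_zero] at h1
  exact h1
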